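/- Let α < 0 < β and let f be a nonnegative measurable function on (0,∞) with P_{α,β}(f) < ∞. Then for the even extension f̄ of f one has R_{α,β}(f̄) ≤ 2^{1/β − 1/α} · P_{α,β}(f). -/

import Mathlib

open MeasureTheory Set

/-- The `p`-mean of `f` over the interval `(a, b)`:
`M_{(a,b),p}(f) = ((1/(b-a)) ∫_a^b f(x)^p dx)^{1/p}`. -/
noncomputable def intervalMean (p a b : ℝ) (f : ℝ → ℝ) : ℝ :=
  ((b - a)⁻¹ * ∫ x in a..b, f x ^ p) ^ (1 / p)

/-- The set of ratios `M_{I,β}(f)/M_{I,α}(f)` over bounded intervals `I ⊂ (0,∞)`;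
its supremum is `P_{α,β}(f)`. -/
def ratioSetPos (α β : ℝ) (f : ℝ → ℝ) : Set ℝ :=
  {r | ∃ a b : ℝ, 0 ≤ a ∧ a < b ∧ r = intervalMean β a b f / intervalMean α a b f}

/-- The set of ratios `M_{I,β}(g)/M_{I,α}(g)` over bounded intervals `I ⊂ ℝ`;
its supremum is `R_{α,β}(g)`. -/
def ratioSetAll (α β : ℝ) (g : ℝ → ℝ) : Set ℝ :=
  {r | ∃ a b : ℝ, a < b ∧ r = intervalMean β a b g / intervalMean α a b g}

namespace EvenExtAux

lemma ae_ne_zero : ∀ᵐ x : ℝ, x ≠ (0:ℝ) := by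
  rw [MeasureTheory.ae_iff]
  simpa using Real.volume_singleton (x := 0)

/-- integrability reflects across 0 for even integrands -/
lemma II_reflect (F : ℝ → ℝ) {a : ℝ} (ha : a ≤ 0)
    (h : IntervalIntegrable (fun x => F |x|) volume a 0) :
    IntervalIntegrable F volume 0 (-a) := by
  have h1 := (IntervalIntegrable.iff_comp_neg).mp h
  simp only [abs_neg, neg_zero] at h1
  have h2 : IntervalIntegrable (fun x => F |x|) volume 0 (-a) := h1.symm
  rw [intervalIntegrable_iff_integrableOn_Ioc_of_le (by linarith)] at h2 ⊢
  exact h2.congr_fun (fun x hx => by dsimp only; rw [abs_of_pos hx.1]) measurableSet_Ioc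

lemma II_posside (F : ℝ → ℝ) {b : ℝ} (hb : 0 ≤ b)
    (h : IntervalIntegrable (fun x => F |x|) volume 0 b) :
    IntervalIntegrable F volume 0 b := by
  rw [intervalIntegrable_iff_integrableOn_Ioc_of_le hb] at h ⊢
  exact h.congr_fun (fun x hx => by dsimp only; rw [abs_of_pos hx.1]) measurableSet_Ioc

lemma integral_reflect (F : ℝ → ℝ) (p : ℝ) {a : ℝ} (ha : a ≤ 0) :
    ∫ x in a..(0:ℝ), F |x| ^ p = ∫ x in (0:ℝ)..(-a), F x ^ p := by
  have h1 : ∫ x in a..(0:ℝ), F |x| ^ p = ∫ x in a..(0:ℝ), F (-x) ^ p :=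
    intervalIntegral.integral_congr (fun x hx => by
      rw [uIcc_of_le ha] at hx
      rw [abs_of_nonpos hx.2])
  rw [h1]
  simpa using intervalIntegral.integral_comp_neg (a := a) (b := 0) (fun x => F x ^ p)

lemma integral_posside (F : ℝ → ℝ) (p : ℝ) {a b : ℝ} (ha : 0 ≤ a) (hab : a ≤ b) :
    ∫ x in a..b, F |x| ^ p = ∫ x in a..b, F x ^ p :=
  intervalIntegral.integral_congr (fun x hx => by
    rw [uIcc_of_le hab] at hx
    rw [abs_of_nonneg (ha.trans hx.1)])

variable {f : ℝ → ℝ} (hnonneg : ∀ x > (0 : ℝ), 0 ≤ f x)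

include hnonneg

/-- nonnegativity of the abs-composed power integral on any interval -/
lemma absInt_nonneg (p : ℝ) {a b : ℝ} (hab : a ≤ b) :
    0 ≤ ∫ x in a..b, f |x| ^ p := by
  apply intervalIntegral.integral_nonneg_of_ae_restrict hab
  filter_upwards [ae_restrict_of_ae (μ := volume) ae_ne_zero] with x hx
  exact Real.rpow_nonneg (hnonneg _ (abs_pos.mpr hx)) p

lemma posInt_nonneg (p : ℝ) {a b : ℝ} (ha : 0 ≤ a) (hab : a ≤ b) :
    0 ≤ ∫ x in a..b, f x ^ p := by
  apply intervalIntegral.integral_nonneg_of_ae_restrict hab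
  filter_upwards [ae_restrict_of_ae (μ := volume) ae_ne_zero,
    ae_restrict_mem measurableSet_Icc] with x hx hx2
  have : 0 < x := lt_of_le_of_ne (ha.trans hx2.1) (Ne.symm hx)
  exact Real.rpow_nonneg (hnonneg _ this) p

lemma mean_nonneg (p : ℝ) {a b : ℝ} (ha : 0 ≤ a) (hab : a ≤ b) :
    0 ≤ intervalMean p a b f :=
  Real.rpow_nonneg (mul_nonneg (inv_nonneg.mpr (by linarith))
    (posInt_nonneg hnonneg p ha hab)) _

end EvenExtAux

open EvenExtAux in
/-- If `α < 0 < β` and `f` is a nonnegative measurable function on `(0,∞)` with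
`P_{α,β}(f) < ∞`, then the even extension `f̄(x) = f(|x|)` satisfies
`R_{α,β}(f̄) ≤ 2^{1/β - 1/α} · P_{α,β}(f)`. -/
theorem evenExtension_bound_of_mixed_exponents
    (α β : ℝ) (hα : α < 0) (hβ : 0 < β) (f : ℝ → ℝ)
    (hmeas : Measurable f) (hnonneg : ∀ x > (0 : ℝ), 0 ≤ f x)
    (hP : BddAbove (ratioSetPos α β f)) :
    sSup (ratioSetAll α β (fun x => f |x|)) ≤
      (2 : ℝ) ^ (1 / β - 1 / α) * sSup (ratioSetPos α β f) := by
  have hβ' : (0:ℝ) < 1 / β := by positivity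
  have hα' : 1 / α < 0 := by
    rw [one_div]
    exact inv_neg''.mpr hα
  have hexp : (0:ℝ) ≤ 1 / β - 1 / α := by linarith
  have hfac0 : (0:ℝ) ≤ (2:ℝ) ^ (1 / β - 1 / α) := Real.rpow_nonneg (by norm_num) _
  have hfac1 : (1:ℝ) ≤ (2:ℝ) ^ (1 / β - 1 / α) := Real.one_le_rpow one_le_two hexp
  -- sSup ratioSetPos is nonnegative
  have hPle : ∀ u v : ℝ, 0 ≤ u → u < v →
      intervalMean β u v f / intervalMean α u v f ≤ sSup (ratioSetPos α β f) :=
    fun u v hu huv => le_csSup hP ⟨u, v, hu, huv, rfl⟩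
  have hSpos : 0 ≤ sSup (ratioSetPos α β f) := by
    refine le_trans ?_ (hPle 0 1 le_rfl one_pos)
    exact div_nonneg (mean_nonneg hnonneg β le_rfl zero_le_one)
      (mean_nonneg hnonneg α le_rfl zero_le_one)
  have hRHS : 0 ≤ (2:ℝ) ^ (1 / β - 1 / α) * sSup (ratioSetPos α β f) :=
    mul_nonneg hfac0 hSpos
  refine Real.sSup_le ?_ hRHS
  rintro r ⟨a, b, hab, rfl⟩
  -- a general bound for intervals contained in the positive half line
  have hposbound : ∀ u v : ℝ, 0 ≤ u → u < v →
      intervalMean β u v f / intervalMean α u v f ≤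
        (2:ℝ) ^ (1 / β - 1 / α) * sSup (ratioSetPos α β f) := fun u v hu huv =>
    le_trans (hPle u v hu huv) (le_mul_of_one_le_left hSpos hfac1)
  rcases le_or_gt 0 a with ha | ha
  · -- Case A : interval in the positive half line
    have heq : ∀ p : ℝ, intervalMean p a b (fun x => f |x|) = intervalMean p a b f := by
      intro p
      simp only [intervalMean]
      rw [integral_posside f p ha hab.le]
    rw [heq α, heq β]
    exact hposbound a b ha hab
  rcases le_or_gt b 0 with hb | hb
  · -- Case B : interval in the negative half line; reflect
    have heq : ∀ p : ℝ, intervalMean p a b (fun x => f |x|) = intervalMean p (-b) (-a) f := by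
      intro p
      simp only [intervalMean]
      have h1 : ∫ x in a..b, f |x| ^ p = ∫ x in (-b)..(-a), f x ^ p := by
        have h2 : ∫ x in a..b, f |x| ^ p = ∫ x in a..b, f (-x) ^ p :=
          intervalIntegral.integral_congr (fun x hx => by
            rw [uIcc_of_le hab.le] at hx
            rw [abs_of_nonpos (hx.2.trans hb)])
        rw [h2]
        exact intervalIntegral.integral_comp_neg (fun x => f x ^ p)
      rw [h1]
      ring_nf
    rw [heq α, heq β]
    exact hposbound (-b) (-a) (by linarith) (by linarith)
  · -- Case C : a < 0 < b
    set c : ℝ := max (-a) b with hc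
    have hc0 : 0 < c := lt_max_of_lt_right hb
    have hcba : c ≤ b - a := max_le (by linarith) (by linarith)
    have hba : (0:ℝ) < b - a := by linarith
    have hinv : (b - a)⁻¹ ≤ c⁻¹ := inv_anti₀ hc0 hcba
    set S' : ℝ := ∫ x in a..b, f |x| ^ α with hS'def
    set S : ℝ := ∫ x in a..b, f |x| ^ β with hSdef
    set T' : ℝ := ∫ x in (0:ℝ)..c, f x ^ α with hT'def
    set T : ℝ := ∫ x in (0:ℝ)..c, f x ^ β with hTdef
    have hNα : intervalMean α a b (fun x => f |x|) = ((b - a)⁻¹ * S') ^ (1/α) := rfl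
    have hNβ : intervalMean β a b (fun x => f |x|) = ((b - a)⁻¹ * S) ^ (1/β) := rfl
    -- a.e. nonnegativity on Ioc 0 c
    have haeT : ∀ p : ℝ, (0:ℝ → ℝ) ≤ᵐ[volume.restrict (Ioc (0:ℝ) c)] fun x => f x ^ p := by
      intro p
      refine (ae_restrict_iff' measurableSet_Ioc).mpr (ae_of_all _ fun x hx => ?_)
      exact Real.rpow_nonneg (hnonneg _ hx.1) p
    -- splitting machinery, given interval integrability
    have hsplit : ∀ p : ℝ, IntervalIntegrable (fun x => f |x| ^ p) volume a b →
        (∫ x in a..b, f |x| ^ p) ≤ 2 * ∫ x in (0:ℝ)..c, f x ^ p := by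
      intro p hI
      have hI0 : IntervalIntegrable (fun x => f |x| ^ p) volume a 0 :=
        hI.mono_set (uIcc_subset_uIcc left_mem_uIcc
          (by rw [mem_uIcc]; left; constructor <;> linarith))
      have hIb : IntervalIntegrable (fun x => f |x| ^ p) volume 0 b :=
        hI.mono_set (uIcc_subset_uIcc
          (by rw [mem_uIcc]; left; constructor <;> linarith) right_mem_uIcc)
      have hIra : IntervalIntegrable (fun x => f x ^ p) volume 0 (-a) :=
        II_reflect (fun x => f x ^ p) ha.le hI0
      have hIrb : IntervalIntegrable (fun x => f x ^ p) volume 0 b :=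
        II_posside (fun x => f x ^ p) hb.le hIb
      have hIc : IntervalIntegrable (fun x => f x ^ p) volume 0 c := by
        rcases le_total (-a) b with h | h
        · rwa [hc, max_eq_right h]
        · rwa [hc, max_eq_left h]
      have hadd : (∫ x in a..(0:ℝ), f |x| ^ p) + ∫ x in (0:ℝ)..b, f |x| ^ p
          = ∫ x in a..b, f |x| ^ p :=
        intervalIntegral.integral_add_adjacent_intervals hI0 hIb
      have e1 : ∫ x in a..(0:ℝ), f |x| ^ p = ∫ x in (0:ℝ)..(-a), f x ^ p :=
        integral_reflect f p ha.le
      have e2 : ∫ x in (0:ℝ)..b, f |x| ^ p = ∫ x in (0:ℝ)..b, f x ^ p :=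
        integral_posside f p le_rfl hb.le
      have m1 : (∫ x in (0:ℝ)..(-a), f x ^ p) ≤ ∫ x in (0:ℝ)..c, f x ^ p :=
        intervalIntegral.integral_mono_interval le_rfl (by linarith) (le_max_left _ _)
          (haeT p) hIc
      have m2 : (∫ x in (0:ℝ)..b, f x ^ p) ≤ ∫ x in (0:ℝ)..c, f x ^ p :=
        intervalIntegral.integral_mono_interval le_rfl hb.le (le_max_right _ _)
          (haeT p) hIc
      rw [← hadd, e1, e2]
      linarith
    have hRHS' := hRHS
    by_cases hS'0 : S' = 0
    · -- denominator mean is zero, ratio is zero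
      rw [hNα, hS'0, mul_zero, Real.zero_rpow (one_div_ne_zero hα.ne)]
      · rw [div_zero]; exact hRHS'
    · have hS'nn : 0 ≤ S' := absInt_nonneg hnonneg α hab.le
      have hS'pos : 0 < S' := lt_of_le_of_ne hS'nn (Ne.symm hS'0)
      have hIα : IntervalIntegrable (fun x => f |x| ^ α) volume a b := by
        rw [intervalIntegrable_iff_integrableOn_Ioc_of_le hab.le]
        by_contra h
        apply hS'0
        rw [hS'def, intervalIntegral.integral_of_le hab.le]
        exact integral_undef h
      have hS'le : S' ≤ 2 * T' := hsplit α hIα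
      have hT'pos : 0 < T' := by linarith
      -- lower bound for the denominator mean
      have hxpos : 0 < (b - a)⁻¹ * S' := by positivity
      have hxy : (b - a)⁻¹ * S' ≤ 2 * (c⁻¹ * T') := by
        have := mul_le_mul hinv hS'le hS'nn (inv_nonneg.mpr hc0.le)
        linarith [this]
      have hMαc : intervalMean α 0 c f = (c⁻¹ * T') ^ (1/α) := by
        simp only [intervalMean, sub_zero, hT'def]
      have hMαcpos : 0 < intervalMean α 0 c f := by
        rw [hMαc]; exact Real.rpow_pos_of_pos (by positivity) _
      have hden : (2:ℝ) ^ (1/α) * intervalMean α 0 c f ≤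
          intervalMean α a b (fun x => f |x|) := by
        rw [hNα, hMαc, ← Real.mul_rpow (by norm_num) (by positivity)]
        exact Real.rpow_le_rpow_of_nonpos hxpos hxy hα'.le
      have hdenpos : 0 < (2:ℝ) ^ (1/α) * intervalMean α 0 c f :=
        mul_pos (Real.rpow_pos_of_pos two_pos _) hMαcpos
      -- upper bound for the numerator mean
      have hSnn : 0 ≤ S := absInt_nonneg hnonneg β hab.le
      by_cases hS0 : S = 0
      · rw [hNβ, hS0, mul_zero, Real.zero_rpow (by positivity : (1:ℝ)/β ≠ 0), zero_div]
        exact hRHS'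
      have hSpos' : 0 < S := lt_of_le_of_ne hSnn (Ne.symm hS0)
      have hIβ : IntervalIntegrable (fun x => f |x| ^ β) volume a b := by
        rw [intervalIntegrable_iff_integrableOn_Ioc_of_le hab.le]
        by_contra h
        apply hS0
        rw [hSdef, intervalIntegral.integral_of_le hab.le]
        exact integral_undef h
      have hSle : S ≤ 2 * T := hsplit β hIβ
      have hTnn : 0 ≤ T := posInt_nonneg hnonneg β le_rfl hc0.le
      have hMβc : intervalMean β 0 c f = (c⁻¹ * T) ^ (1/β) := by
        simp only [intervalMean, sub_zero, hTdef]
      have hMβcnn : 0 ≤ intervalMean β 0 c f :=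
        mean_nonneg hnonneg β le_rfl hc0.le
      have hnum : intervalMean β a b (fun x => f |x|) ≤
          (2:ℝ) ^ (1/β) * intervalMean β 0 c f := by
        rw [hNβ, hMβc, ← Real.mul_rpow (by norm_num) (mul_nonneg (inv_nonneg.mpr hc0.le) hTnn)]
        apply Real.rpow_le_rpow (mul_nonneg (inv_nonneg.mpr hba.le) hSnn) _ hβ'.le
        have := mul_le_mul hinv hSle hSnn (inv_nonneg.mpr hc0.le)
        linarith [this]
      -- combine
      have hratio : intervalMean β a b (fun x => f |x|) / intervalMean α a b (fun x => f |x|)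
          ≤ ((2:ℝ) ^ (1/β) * intervalMean β 0 c f) / ((2:ℝ) ^ (1/α) * intervalMean α 0 c f) :=
        div_le_div₀ (mul_nonneg (Real.rpow_nonneg (by norm_num) _) hMβcnn)
          hnum hdenpos hden
      refine hratio.trans ?_
      have : ((2:ℝ) ^ (1/β) * intervalMean β 0 c f) / ((2:ℝ) ^ (1/α) * intervalMean α 0 c f)
          = (2:ℝ) ^ (1/β - 1/α) * (intervalMean β 0 c f / intervalMean α 0 c f) := by
        rw [Real.rpow_sub two_pos, div_mul_div_comm]
      rw [this]
      exact mul_le_mul_of_nonneg_left (hPle 0 c le_rfl hc0) hfac0
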